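/- Let A be a self-adjoint operator on a separable Hilbert space U with orthonormal basis of eigenvectors (e_j) and eigenvalues λ_j < 0 with λ_j → -∞. For τ > 0, n ≥ 1, r ∈ ℝ and 0 < s ≤ 1, the operator (I - τA)^{-n}, viewed as a map from D((-A)^{r-s}) to D((-A)^r), is bounded with operator norm at most s^s (1 - s/n)^{(n-s)} (nτ)^{-s}. In particular it is at most (nτ)^{-s}. -/

import Mathlib

open Real Filter

/-- The diagonal operator `(I - τA)^{-n}` from `D((-A)^{r-s})` to `D((-A)^r)` (acting
coefficientwise on the eigenbasis expansion by multiplication with `(1-τλ_j)^{-n}`)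
is bounded with operator norm at most `s^s (1-s/n)^{n-s} (nτ)^{-s}`, in particular
at most `(nτ)^{-s}`, for `0 < s ≤ 1`. -/
theorem stmt3 (l : ℕ → ℝ) (τ s r : ℝ) (n : ℕ)
    (hneg : ∀ j, l j < 0) (hmono : Antitone l)
    (hlim : Tendsto l atTop atBot)
    (hτ : 0 < τ) (hn : 1 ≤ n) (hs0 : 0 < s) (hs1 : s ≤ 1)
    (v : ℕ → ℝ) (hv : Summable (fun j => ((-l j) ^ (r - s) * v j) ^ 2)) :
    (∑' j, ((-l j) ^ r * ((1 - τ * l j) ^ (-(n : ℝ)) * v j)) ^ 2)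
      ≤ (s ^ s * (1 - s / n) ^ ((n : ℝ) - s) * ((n : ℝ) * τ) ^ (-s)) ^ 2 *
        ∑' j, ((-l j) ^ (r - s) * v j) ^ 2 ∧
    (∑' j, ((-l j) ^ r * ((1 - τ * l j) ^ (-(n : ℝ)) * v j)) ^ 2)
      ≤ (((n : ℝ) * τ) ^ (-s)) ^ 2 * ∑' j, ((-l j) ^ (r - s) * v j) ^ 2 := by
  have hn1 : (1:ℝ) ≤ (n:ℝ) := by exact_mod_cast hn
  have hnpos : (0:ℝ) < (n:ℝ) := by linarith
  have hsn : s ≤ (n:ℝ) := hs1.trans hn1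
  have hbase : 0 ≤ 1 - s / (n:ℝ) := by
    have : s / (n:ℝ) ≤ 1 := (div_le_one hnpos).mpr hsn
    linarith
  have hexp : (0:ℝ) ≤ (n:ℝ) - s := by linarith
  set C : ℝ := s ^ s * (1 - s / (n:ℝ)) ^ ((n : ℝ) - s) * ((n : ℝ) * τ) ^ (-s) with hCdef
  have hC0 : 0 ≤ C :=
    mul_nonneg (mul_nonneg (Real.rpow_nonneg hs0.le _) (Real.rpow_nonneg hbase _))
      (Real.rpow_nonneg (by positivity) _)
  -- the key pointwise bound
  have key : ∀ x : ℝ, 0 < x → x ^ s ≤ C * (1 + τ * x) ^ (n:ℝ) := by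
    intro x hx
    set θ : ℝ := s / (n:ℝ) with hθdef
    set a : ℝ := (n:ℝ) * τ * x / s with hadef
    set b : ℝ := (n:ℝ) / ((n:ℝ) - s) with hbdef
    have ha : 0 ≤ a := by positivity
    have hb : 0 ≤ b := div_nonneg hnpos.le hexp
    have hθ0 : 0 ≤ θ := by positivity
    have hθ1 : θ ≤ 1 := (div_le_one hnpos).mpr hsn
    have hgm : a ^ θ * b ^ (1 - θ) ≤ θ * a + (1 - θ) * b :=
      Real.geom_mean_le_arith_mean2_weighted hθ0 (by linarith) ha hb (by ring)
    have h1 : θ * a = τ * x := by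
      rw [hθdef, hadef, div_mul_div_comm, div_eq_iff (mul_ne_zero hnpos.ne' hs0.ne')]
      ring
    have h2 : (1 - θ) * b ≤ 1 := by
      rcases eq_or_lt_of_le hsn with h | h
      · have : θ = 1 := by rw [hθdef, h, div_self hnpos.ne']
        simp [this]
      · have hne : (n:ℝ) - s ≠ 0 := by linarith
        have : (1 - θ) * b = 1 := by
          rw [hθdef, hbdef]
          field_simp
        linarith
    have hgm2 : a ^ θ * b ^ (1 - θ) ≤ 1 + τ * x := by
      calc a ^ θ * b ^ (1 - θ) ≤ θ * a + (1 - θ) * b := hgm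
        _ ≤ τ * x + 1 := by rw [h1]; linarith
        _ = 1 + τ * x := by ring
    have hpow : (a ^ θ * b ^ (1 - θ)) ^ (n:ℝ) ≤ (1 + τ * x) ^ (n:ℝ) :=
      Real.rpow_le_rpow (by positivity) hgm2 hnpos.le
    have hLHS : (a ^ θ * b ^ (1 - θ)) ^ (n:ℝ) = a ^ s * b ^ ((n:ℝ) - s) := by
      rw [Real.mul_rpow (Real.rpow_nonneg ha _) (Real.rpow_nonneg hb _),
        ← Real.rpow_mul ha, ← Real.rpow_mul hb]
      congr 1
      · congr 1
        rw [hθdef]; field_simp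
      · congr 1
        rw [hθdef]; field_simp
    have h3 : (1 - s / (n:ℝ)) ^ ((n:ℝ) - s) * b ^ ((n:ℝ) - s) = 1 := by
      rcases eq_or_lt_of_le hsn with h | h
      · rw [h, sub_self, Real.rpow_zero, Real.rpow_zero, one_mul]
      · have hne : (n:ℝ) - s ≠ 0 := by linarith
        rw [← Real.mul_rpow hbase hb]
        have : (1 - s / (n:ℝ)) * b = 1 := by
          rw [hbdef]; field_simp
        rw [this, Real.one_rpow]
    have h4 : s ^ s * ((n:ℝ) * τ) ^ (-s) * a ^ s = x ^ s := by
      have hax : a = ((n:ℝ) * τ) / s * x := by rw [hadef]; ring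
      rw [hax, Real.mul_rpow (by positivity) hx.le,
        Real.div_rpow (by positivity) hs0.le,
        Real.rpow_neg (by positivity)]
      have h5 : (0:ℝ) < s ^ s := Real.rpow_pos_of_pos hs0 _
      have h6 : (0:ℝ) < ((n:ℝ) * τ) ^ s := Real.rpow_pos_of_pos (by positivity) _
      field_simp
    have hid : C * (a ^ s * b ^ ((n:ℝ) - s)) = x ^ s := by
      calc C * (a ^ s * b ^ ((n:ℝ) - s))
          = (s ^ s * ((n:ℝ) * τ) ^ (-s) * a ^ s) *
            ((1 - s / (n:ℝ)) ^ ((n:ℝ) - s) * b ^ ((n:ℝ) - s)) := by rw [hCdef]; ring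
        _ = x ^ s := by rw [h3, h4, mul_one]
    calc x ^ s = C * (a ^ s * b ^ ((n:ℝ) - s)) := hid.symm
      _ ≤ C * (1 + τ * x) ^ (n:ℝ) := by
          apply mul_le_mul_of_nonneg_left _ hC0
          rw [← hLHS]; exact hpow
  -- per-term bound
  have hterm : ∀ j, ((-l j) ^ r * ((1 - τ * l j) ^ (-(n : ℝ)) * v j)) ^ 2
      ≤ C ^ 2 * ((-l j) ^ (r - s) * v j) ^ 2 := by
    intro j
    have hx : 0 < -l j := by linarith [hneg j]
    have hd : (0:ℝ) < 1 + τ * (-l j) := by positivity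
    have hdl : 1 - τ * l j = 1 + τ * (-l j) := by ring
    have hA : (0:ℝ) ≤ (-l j) ^ r * (1 - τ * l j) ^ (-(n : ℝ)) := by
      rw [hdl]; positivity
    have hAB : (-l j) ^ r * (1 - τ * l j) ^ (-(n : ℝ)) ≤ C * (-l j) ^ (r - s) := by
      have hks := key (-l j) hx
      have hpos : (0:ℝ) < (1 + τ * (-l j)) ^ (n:ℝ) := Real.rpow_pos_of_pos hd _
      rw [hdl, Real.rpow_neg hd.le, ← div_eq_mul_inv, div_le_iff₀ hpos]
      have hre : (-l j) ^ r = (-l j) ^ (r - s) * (-l j) ^ s := by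
        rw [← Real.rpow_add hx]; congr 1; ring
      rw [hre]
      calc (-l j) ^ (r - s) * (-l j) ^ s
          ≤ (-l j) ^ (r - s) * (C * (1 + τ * (-l j)) ^ (n:ℝ)) :=
            mul_le_mul_of_nonneg_left hks (Real.rpow_nonneg hx.le _)
        _ = C * (-l j) ^ (r - s) * (1 + τ * (-l j)) ^ (n:ℝ) := by ring
    calc ((-l j) ^ r * ((1 - τ * l j) ^ (-(n : ℝ)) * v j)) ^ 2
        = ((-l j) ^ r * (1 - τ * l j) ^ (-(n : ℝ))) ^ 2 * (v j) ^ 2 := by ring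
      _ ≤ (C * (-l j) ^ (r - s)) ^ 2 * (v j) ^ 2 := by
          apply mul_le_mul_of_nonneg_right _ (sq_nonneg _)
          exact pow_le_pow_left₀ hA hAB 2
      _ = C ^ 2 * ((-l j) ^ (r - s) * v j) ^ 2 := by ring
  have hsum2 : Summable (fun j => C ^ 2 * ((-l j) ^ (r - s) * v j) ^ 2) := hv.mul_left _
  have hsum1 : Summable (fun j => ((-l j) ^ r * ((1 - τ * l j) ^ (-(n : ℝ)) * v j)) ^ 2) :=
    Summable.of_nonneg_of_le (fun j => sq_nonneg _) hterm hsum2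
  have hmain : (∑' j, ((-l j) ^ r * ((1 - τ * l j) ^ (-(n : ℝ)) * v j)) ^ 2)
      ≤ C ^ 2 * ∑' j, ((-l j) ^ (r - s) * v j) ^ 2 := by
    calc (∑' j, ((-l j) ^ r * ((1 - τ * l j) ^ (-(n : ℝ)) * v j)) ^ 2)
        ≤ ∑' j, C ^ 2 * ((-l j) ^ (r - s) * v j) ^ 2 := Summable.tsum_le_tsum hterm hsum1 hsum2
      _ = C ^ 2 * ∑' j, ((-l j) ^ (r - s) * v j) ^ 2 := tsum_mul_left
  refine ⟨hmain, hmain.trans ?_⟩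
  apply mul_le_mul_of_nonneg_right _ (tsum_nonneg fun j => sq_nonneg _)
  apply pow_le_pow_left₀ hC0
  have h7 : s ^ s ≤ 1 := Real.rpow_le_one hs0.le hs1 hs0.le
  have h8 : (1 - s / (n:ℝ)) ^ ((n:ℝ) - s) ≤ 1 :=
    Real.rpow_le_one hbase (by linarith [div_nonneg hs0.le hnpos.le]) hexp
  have h9 : (0:ℝ) ≤ ((n : ℝ) * τ) ^ (-s) := Real.rpow_nonneg (by positivity) _
  have h10 : (0:ℝ) ≤ s ^ s := Real.rpow_nonneg hs0.le _
  have h11 : (0:ℝ) ≤ (1 - s / (n:ℝ)) ^ ((n:ℝ) - s) := Real.rpow_nonneg hbase _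
  rw [hCdef]
  calc s ^ s * (1 - s / (n:ℝ)) ^ ((n:ℝ) - s) * ((n : ℝ) * τ) ^ (-s)
      ≤ 1 * ((n : ℝ) * τ) ^ (-s) :=
        mul_le_mul_of_nonneg_right (mul_le_one₀ h7 h11 h8) h9
    _ = ((n : ℝ) * τ) ^ (-s) := one_mul _
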